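/- There is no Borel set A ⊆ ℝ² such that (a) ℋ¹(V_s \ A) = 0 for every s ∈ ℝ, where V_s = {s} × ℝ, and (b) ℋ¹(H_t ∩ A) = 0 for every t ∈ ℝ, where H_t = ℝ × {t}. Here ℋ¹ denotes 1-dimensional Hausdorff measure on ℝ². -/

import Mathlib

open MeasureTheory
open scoped ENNReal

noncomputable def eMap (s t : ℝ) : EuclideanSpace ℝ (Fin 2) :=
  EuclideanSpace.single 0 s + EuclideanSpace.single 1 t

lemma eMap_apply0 (s t : ℝ) : eMap s t 0 = s := by
  simp [eMap, EuclideanSpace.single_apply]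

lemma eMap_apply1 (s t : ℝ) : eMap s t 1 = t := by
  simp [eMap, EuclideanSpace.single_apply]

lemma eMap_eq (p : EuclideanSpace ℝ (Fin 2)) : eMap (p 0) (p 1) = p := by
  ext i
  fin_cases i
  · exact eMap_apply0 _ _
  · exact eMap_apply1 _ _

lemma isometry_vert (s : ℝ) : Isometry (fun t => eMap s t) := by
  apply Isometry.of_dist_eq
  intro a b
  have : eMap s a - eMap s b = EuclideanSpace.single 1 (a - b) := by
    simp [eMap]
    ext i
    simp [EuclideanSpace.single_apply]
    split <;> ring
  rw [dist_eq_norm, this, EuclideanSpace.norm_single, Real.norm_eq_abs, Real.dist_eq]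

lemma isometry_horiz (t : ℝ) : Isometry (fun s => eMap s t) := by
  apply Isometry.of_dist_eq
  intro a b
  have : eMap a t - eMap b t = EuclideanSpace.single 0 (a - b) := by
    simp [eMap]
    ext i
    simp [EuclideanSpace.single_apply]
    split <;> ring
  rw [dist_eq_norm, this, EuclideanSpace.norm_single, Real.norm_eq_abs, Real.dist_eq]

lemma measurable_eMap : Measurable (fun p : ℝ × ℝ => eMap p.1 p.2) := by
  have h : Measurable (fun p : ℝ × ℝ => (fun i : Fin 2 => eMap p.1 p.2 i)) := by
    rw [measurable_pi_iff]
    intro i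
    fin_cases i
    · show Measurable fun x : ℝ × ℝ => eMap x.1 x.2 0
      simp only [eMap_apply0]; exact measurable_fst
    · show Measurable fun x : ℝ × ℝ => eMap x.1 x.2 1
      simp only [eMap_apply1]; exact measurable_snd
  exact (MeasurableEquiv.toLp 2 (Fin 2 → ℝ)).measurable.comp h

/-- There is no Borel set `A ⊆ ℝ²` such that `ℋ¹(V_s \ A) = 0` for every vertical line
`V_s = {s} × ℝ` and `ℋ¹(H_t ∩ A) = 0` for every horizontal line `H_t = ℝ × {t}`. -/
theorem no_essential_supremum_of_vertical_lines :
    ¬ ∃ A : Set (EuclideanSpace ℝ (Fin 2)), MeasurableSet A ∧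
      (∀ s : ℝ, μH[1] ({p : EuclideanSpace ℝ (Fin 2) | p 0 = s} \ A) = 0) ∧
      (∀ t : ℝ, μH[1] ({p : EuclideanSpace ℝ (Fin 2) | p 1 = t} ∩ A) = 0) := by
  rintro ⟨A, hA, hV, hH⟩
  set B : Set (ℝ × ℝ) := (fun p : ℝ × ℝ => eMap p.1 p.2) ⁻¹' A with hBdef
  have hB : MeasurableSet B := measurable_eMap hA
  -- vertical sections of Bᶜ are null
  have hVert : ∀ s : ℝ, volume {t : ℝ | (s, t) ∉ B} = 0 := by
    intro s
    have himg : (fun t => eMap s t) '' {t : ℝ | (s, t) ∉ B} =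
        {p : EuclideanSpace ℝ (Fin 2) | p 0 = s} \ A := by
      ext p
      constructor
      · rintro ⟨t, ht, rfl⟩
        exact ⟨eMap_apply0 s t, ht⟩
      · rintro ⟨h0, hp⟩
        refine ⟨p 1, ?_, ?_⟩
        · show eMap s (p 1) ∉ A
          rw [← h0, eMap_eq]; exact hp
        · show eMap s (p 1) = p
          rw [← h0, eMap_eq]
    have := (isometry_vert s).hausdorffMeasure_image (Or.inl zero_le_one)
      {t : ℝ | (s, t) ∉ B}
    rw [himg, hV s] at this
    rw [← MeasureTheory.hausdorffMeasure_real]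
    exact this.symm
  -- horizontal sections of B are null
  have hHoriz : ∀ t : ℝ, volume {s : ℝ | (s, t) ∈ B} = 0 := by
    intro t
    have himg : (fun s => eMap s t) '' {s : ℝ | (s, t) ∈ B} ⊆
        {p : EuclideanSpace ℝ (Fin 2) | p 1 = t} ∩ A := by
      rintro p ⟨s, hs, rfl⟩
      exact ⟨eMap_apply1 s t, hs⟩
    have h1 := (isometry_horiz t).hausdorffMeasure_image (Or.inl zero_le_one)
      {s : ℝ | (s, t) ∈ B}
    have h2 : μH[1] ((fun s => eMap s t) '' {s : ℝ | (s, t) ∈ B}) = 0 :=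
      measure_mono_null himg (hH t)
    rw [h1] at h2
    rw [← MeasureTheory.hausdorffMeasure_real]
    exact h2
  set C : Set (ℝ × ℝ) := (Set.Icc (0:ℝ) 1 ×ˢ Set.Icc (0:ℝ) 1) ∩ B with hCdef
  have hC : MeasurableSet C := (measurableSet_Icc.prod measurableSet_Icc).inter hB
  have hzero : volume C = 0 := by
    rw [Measure.volume_eq_prod, Measure.prod_apply_symm hC]
    rw [lintegral_eq_zero_iff]
    · filter_upwards with t
      apply measure_mono_null _ (hHoriz t)
      intro s hs
      exact hs.2
    · exact measurable_measure_prodMk_right hC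
  have hone : (1 : ℝ≥0∞) ≤ volume C := by
    rw [Measure.volume_eq_prod, Measure.prod_apply hC]
    have key : ∀ s ∈ Set.Icc (0:ℝ) 1, volume (Prod.mk s ⁻¹' C) = 1 := by
      intro s hs
      have : Prod.mk s ⁻¹' C = Set.Icc (0:ℝ) 1 \ {t : ℝ | (s, t) ∉ B} := by
        ext t
        simp only [hCdef, Set.mem_preimage, Set.mem_inter_iff, Set.mem_prod, Set.mem_diff,
          Set.mem_setOf_eq, not_not]
        constructor
        · rintro ⟨⟨_, ht⟩, hb⟩; exact ⟨ht, hb⟩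
        · rintro ⟨ht, hb⟩; exact ⟨⟨hs, ht⟩, hb⟩
      rw [this, measure_diff_null (hVert s), Real.volume_Icc]
      norm_num
    calc (1 : ℝ≥0∞) = ∫⁻ s in Set.Icc (0:ℝ) 1, 1 := by
          rw [setLIntegral_one, Real.volume_Icc]; norm_num
      _ = ∫⁻ s in Set.Icc (0:ℝ) 1, volume (Prod.mk s ⁻¹' C) := by
          apply setLIntegral_congr_fun measurableSet_Icc
          intro s hs
          exact (key s hs).symm
      _ ≤ ∫⁻ s, volume (Prod.mk s ⁻¹' C) := setLIntegral_le_lintegral _ _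
  rw [hzero] at hone
  simp at hone
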